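/- arXiv:1705.06087 — 3 statements merged into one kernel-verified Lean document; each statement's English description precedes it below -/
import Mathlib

section
/- Let m ≥ 2 be an integer and x ≥ 2 a real number. The number of quadruples (p₁, p₂, q₁, q₂) of primes with p₁, p₂, q₁, q₂ ≤ x, each coprime to m, satisfying the congruence p₁⁻¹·p₂⁻¹ ≡ q₁⁻¹·q₂⁻¹ (mod m) (equivalently p₁·p₂ ≡ q₁·q₂ (mod m)), is at most 2·x²·(x²/m + 1). -/
open Finset

/-- Number of integers in [1,M] in a fixed residue class mod m is ≤ M/m + 1. -/
lemma residue_count (m M r : ℕ) (hm : 0 < m) :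
    ((Finset.Icc 1 M).filter (fun n => n % m = r)).card ≤ M / m + 1 := by
  classical
  have h : ((Finset.Icc 1 M).filter (fun n => n % m = r)).card ≤
      (Finset.range (M / m + 1)).card := by
    apply Finset.card_le_card_of_injOn (fun n => n / m)
    · intro n hn
      simp only [Finset.mem_coe, mem_filter, Finset.mem_Icc] at hn
      simp only [Finset.mem_coe, Finset.mem_range, Nat.lt_succ_iff]
      exact Nat.div_le_div_right hn.1.2
    · intro a ha b hb hab
      simp only at hab
      simp only [coe_filter, Set.mem_setOf_eq, Finset.mem_Icc] at ha hb
      have h1 := Nat.div_add_mod a m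
      have h2 := Nat.div_add_mod b m
      rw [← h1, ← h2, hab, ha.2, hb.2]
  simpa using h

/-- At most two ordered factorizations of n as a product of two primes. -/
lemma pair_count (P : Finset ℕ) (hP : ∀ p ∈ P, Nat.Prime p) (n : ℕ) :
    ((P ×ˢ P).filter (fun p => p.1 * p.2 = n)).card ≤ 2 := by
  classical
  rcases ((P ×ˢ P).filter (fun p => p.1 * p.2 = n)).eq_empty_or_nonempty with h | ⟨⟨a, b⟩, hab⟩
  · simp [h]
  · simp only [mem_filter, Finset.mem_product] at hab
    obtain ⟨⟨haP, hbP⟩, hn⟩ := hab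
    have ha := hP a haP
    have hb := hP b hbP
    have hsub : ((P ×ˢ P).filter (fun p => p.1 * p.2 = n)) ⊆ {(a, b), (b, a)} := by
      rintro ⟨p, q⟩ hpq
      simp only [mem_filter, Finset.mem_product] at hpq
      obtain ⟨⟨hpP, hqP⟩, hpq⟩ := hpq
      have hp := hP p hpP
      have hq := hP q hqP
      have hdvd : p ∣ a * b := ⟨q, by omega⟩
      simp only [Finset.mem_insert, Finset.mem_singleton, Prod.mk.injEq]
      rcases (Nat.Prime.dvd_mul hp).mp hdvd with h1 | h1
      · left
        have hpa : p = a := (Nat.prime_dvd_prime_iff_eq hp ha).mp h1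
        subst hpa
        exact ⟨rfl, Nat.eq_of_mul_eq_mul_left hp.pos (by rw [hpq, ← hn])⟩
      · right
        have hpb : p = b := (Nat.prime_dvd_prime_iff_eq hp hb).mp h1
        subst hpb
        exact ⟨rfl, Nat.eq_of_mul_eq_mul_left hp.pos
          (by rw [hpq, ← hn, Nat.mul_comm])⟩
    calc ((P ×ˢ P).filter (fun p => p.1 * p.2 = n)).card
        ≤ ({(a, b), (b, a)} : Finset (ℕ × ℕ)).card := Finset.card_le_card hsub
      _ ≤ 2 := by
          apply (Finset.card_insert_le _ _).trans
          simp

set_option maxHeartbeats 1000000 in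
theorem stmt_8 (m : ℕ) (hm : 2 ≤ m) (x : ℝ) (hx : 2 ≤ x) :
    ({q : ℕ × ℕ × ℕ × ℕ |
        q.1.Prime ∧ q.2.1.Prime ∧ q.2.2.1.Prime ∧ q.2.2.2.Prime ∧
        (q.1 : ℝ) ≤ x ∧ (q.2.1 : ℝ) ≤ x ∧ (q.2.2.1 : ℝ) ≤ x ∧ (q.2.2.2 : ℝ) ≤ x ∧
        Nat.Coprime q.1 m ∧ Nat.Coprime q.2.1 m ∧
        Nat.Coprime q.2.2.1 m ∧ Nat.Coprime q.2.2.2 m ∧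
        q.1 * q.2.1 ≡ q.2.2.1 * q.2.2.2 [MOD m]}.ncard : ℝ)
      ≤ 2 * x ^ 2 * (x ^ 2 / m + 1) := by
  classical
  have hx0 : (0 : ℝ) ≤ x := by linarith
  set N := ⌊x⌋₊ with hNdef
  have hNx : (N : ℝ) ≤ x := Nat.floor_le hx0
  set P : Finset ℕ := (Finset.Icc 2 N).filter Nat.Prime with hPdef
  have hPprime : ∀ p ∈ P, Nat.Prime p := fun p hp => (mem_filter.mp hp).2
  have hmemP : ∀ p : ℕ, p ∈ P ↔ p.Prime ∧ (p : ℝ) ≤ x := by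
    intro p
    simp only [hPdef, mem_filter, Finset.mem_Icc]
    constructor
    · rintro ⟨⟨h2, hle⟩, hp⟩
      exact ⟨hp, le_trans (by exact_mod_cast hle) hNx⟩
    · rintro ⟨hp, hle⟩
      exact ⟨⟨hp.two_le, Nat.le_floor hle⟩, hp⟩
  set F : Finset (ℕ × ℕ × ℕ × ℕ) :=
    (P ×ˢ P ×ˢ P ×ˢ P).filter (fun q =>
      Nat.Coprime q.1 m ∧ Nat.Coprime q.2.1 m ∧
      Nat.Coprime q.2.2.1 m ∧ Nat.Coprime q.2.2.2 m ∧
      q.1 * q.2.1 % m = q.2.2.1 * q.2.2.2 % m) with hFdef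
  have hset : {q : ℕ × ℕ × ℕ × ℕ |
        q.1.Prime ∧ q.2.1.Prime ∧ q.2.2.1.Prime ∧ q.2.2.2.Prime ∧
        (q.1 : ℝ) ≤ x ∧ (q.2.1 : ℝ) ≤ x ∧ (q.2.2.1 : ℝ) ≤ x ∧ (q.2.2.2 : ℝ) ≤ x ∧
        Nat.Coprime q.1 m ∧ Nat.Coprime q.2.1 m ∧
        Nat.Coprime q.2.2.1 m ∧ Nat.Coprime q.2.2.2 m ∧
        q.1 * q.2.1 ≡ q.2.2.1 * q.2.2.2 [MOD m]} = ↑F := by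
    ext ⟨a, b, c, d⟩
    simp only [Set.mem_setOf_eq, hFdef, coe_filter, Finset.mem_product, hmemP,
      Nat.ModEq]
    constructor
    · rintro ⟨h1, h2, h3, h4, h5, h6, h7, h8, h9, h10, h11, h12, h13⟩
      exact ⟨⟨⟨h1, h5⟩, ⟨h2, h6⟩, ⟨h3, h7⟩, ⟨h4, h8⟩⟩, h9, h10, h11, h12, h13⟩
    · rintro ⟨⟨⟨h1, h5⟩, ⟨h2, h6⟩, ⟨h3, h7⟩, ⟨h4, h8⟩⟩, h9, h10, h11, h12, h13⟩
      exact ⟨h1, h2, h3, h4, h5, h6, h7, h8, h9, h10, h11, h12, h13⟩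
  rw [hset, Set.ncard_coe_finset]
  -- Step 1: fibers of (p₁,p₂,q₁,q₂) ↦ (p₁p₂, q₁, q₂) have size ≤ 2
  set f : ℕ × ℕ × ℕ × ℕ → ℕ × ℕ × ℕ := fun q => (q.1 * q.2.1, q.2.2) with hfdef
  have hfib : ∀ a ∈ F.image f, (F.filter (fun q => f q = a)).card ≤ 2 := by
    rintro ⟨n, c⟩ _
    have hinj : (F.filter (fun q => f q = (n, c))).card ≤
        ((P ×ˢ P).filter (fun p => p.1 * p.2 = n)).card := by
      apply Finset.card_le_card_of_injOn (fun q => (q.1, q.2.1))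
      · rintro ⟨a, b, c1, c2⟩ hq
        simp only [Finset.mem_coe, mem_filter, hFdef, Finset.mem_product, hfdef, Prod.mk.injEq] at hq ⊢
        exact ⟨⟨hq.1.1.1, hq.1.1.2.1⟩, hq.2.1⟩
      · rintro ⟨a, b, c1, c2⟩ ha ⟨a', b', c1', c2'⟩ hb hab
        simp only [coe_filter, Set.mem_setOf_eq, hfdef, Prod.mk.injEq] at ha hb hab
        obtain ⟨_, _, hc⟩ := ha
        obtain ⟨_, _, hc'⟩ := hb
        have h5 : (c1, c2) = (c1', c2') := hc.trans hc'.symm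
        simp only [Prod.mk.injEq] at h5
        simp only [Prod.mk.injEq]
        exact ⟨hab.1, hab.2, h5.1, h5.2⟩
    exact hinj.trans (pair_count P hPprime n)
  have h1 : F.card ≤ 2 * (F.image f).card :=
    Finset.card_le_mul_card_image (f := f) F 2 hfib
  -- Step 2: the image lives in G
  set G : Finset (ℕ × ℕ × ℕ) :=
    ((Finset.Icc 1 (N * N)) ×ˢ (P ×ˢ P)).filter
      (fun t => t.1 % m = (t.2.1 * t.2.2) % m) with hGdef
  have himg : F.image f ⊆ G := by
    rintro ⟨n, c1, c2⟩ ht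
    simp only [Finset.mem_image] at ht
    obtain ⟨⟨a, b, d1, d2⟩, hq, hfq⟩ := ht
    simp only [hfdef, Prod.mk.injEq] at hfq
    obtain ⟨hn, hd1, hd2⟩ := hfq
    simp only [hFdef, mem_filter, Finset.mem_product] at hq
    obtain ⟨⟨haP, hbP, hc1P, hc2P⟩, _, _, _, _, hmod⟩ := hq
    have ha := mem_filter.mp haP
    have hb := mem_filter.mp hbP
    simp only [Finset.mem_Icc] at ha hb
    simp only [hGdef, mem_filter, Finset.mem_product, Finset.mem_Icc]
    refine ⟨⟨⟨?_, ?_⟩, by rw [← hd1]; exact hc1P, by rw [← hd2]; exact hc2P⟩, ?_⟩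
    · rw [← hn]
      have h2a : 2 ≤ a := ha.1.1
      have h2b : 2 ≤ b := hb.1.1
      exact Nat.one_le_iff_ne_zero.mpr (Nat.mul_ne_zero (by omega) (by omega))
    · rw [← hn]; exact Nat.mul_le_mul ha.1.2 hb.1.2
    · rw [← hn, ← hd1, ← hd2]; exact hmod
  -- Step 3: fibers of projection G → second coordinate have size ≤ N*N/m + 1
  have hm0 : 0 < m := by omega
  have hGfib : ∀ c ∈ G.image Prod.snd,
      (G.filter (fun t => t.2 = c)).card ≤ N * N / m + 1 := by
    intro c _
    have : (G.filter (fun t => t.2 = c)).card ≤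
        ((Finset.Icc 1 (N * N)).filter (fun n => n % m = (c.1 * c.2) % m)).card := by
      apply Finset.card_le_card_of_injOn (fun t => t.1)
      · rintro ⟨n, d⟩ ht
        simp only [Finset.mem_coe, mem_filter, hGdef, Finset.mem_product] at ht
        obtain ⟨⟨⟨hn, _⟩, hmod⟩, hd⟩ := ht
        subst hd
        simp only [Finset.mem_coe, mem_filter]
        exact ⟨hn, hmod⟩
      · rintro ⟨n, d⟩ ha ⟨n', d'⟩ hb hab
        simp only [coe_filter, Set.mem_setOf_eq] at ha hb
        simp only at hab
        simp only [Prod.mk.injEq]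
        exact ⟨hab, ha.2.trans hb.2.symm⟩
    exact this.trans (residue_count m (N * N) _ hm0)
  have h2 : G.card ≤ (N * N / m + 1) * (G.image Prod.snd).card :=
    Finset.card_le_mul_card_image (f := Prod.snd) G (N * N / m + 1) hGfib
  have h3 : (G.image Prod.snd).card ≤ P.card * P.card := by
    have : G.image Prod.snd ⊆ P ×ˢ P := by
      rintro ⟨c1, c2⟩ hc
      simp only [Finset.mem_image] at hc
      obtain ⟨⟨n, d⟩, ht, hd⟩ := hc
      simp only [hGdef, mem_filter, Finset.mem_product] at ht
      subst hd
      exact Finset.mem_product.mpr ⟨ht.1.2.1, ht.1.2.2⟩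
    calc (G.image Prod.snd).card ≤ (P ×ˢ P).card := Finset.card_le_card this
      _ = P.card * P.card := Finset.card_product P P
  -- Combine
  have hnat : F.card ≤ 2 * ((N * N / m + 1) * (P.card * P.card)) := by
    calc F.card ≤ 2 * (F.image f).card := h1
      _ ≤ 2 * G.card := by
          exact Nat.mul_le_mul_left 2 (Finset.card_le_card himg)
      _ ≤ 2 * ((N * N / m + 1) * (G.image Prod.snd).card) :=
          Nat.mul_le_mul_left 2 h2
      _ ≤ 2 * ((N * N / m + 1) * (P.card * P.card)) :=
          Nat.mul_le_mul_left 2 (Nat.mul_le_mul_left _ h3)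
  -- Cast to ℝ
  have hPcard : (P.card : ℝ) ≤ x := by
    have h1 : P.card ≤ (Finset.Icc 2 N).card := Finset.card_filter_le _ _
    have h2 : (Finset.Icc 2 N).card = N + 1 - 2 := Nat.card_Icc 2 N
    have h3 : P.card ≤ N := by omega
    exact le_trans (by exact_mod_cast h3) hNx
  have hdiv : ((N * N / m : ℕ) : ℝ) ≤ x ^ 2 / m := by
    have h1 : ((N * N / m : ℕ) : ℝ) ≤ ((N * N : ℕ) : ℝ) / (m : ℝ) := Nat.cast_div_le
    have h2 : ((N * N : ℕ) : ℝ) ≤ x ^ 2 := by push_cast; nlinarith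
    have hm' : (0 : ℝ) < m := by exact_mod_cast hm0
    calc ((N * N / m : ℕ) : ℝ) ≤ ((N * N : ℕ) : ℝ) / (m : ℝ) := h1
      _ ≤ x ^ 2 / m := by gcongr
  have hcast : (F.card : ℝ) ≤ 2 * ((((N * N / m : ℕ) : ℝ) + 1) * ((P.card : ℝ) * (P.card : ℝ))) := by
    exact_mod_cast hnat
  calc (F.card : ℝ) ≤ 2 * ((((N * N / m : ℕ) : ℝ) + 1) * ((P.card : ℝ) * (P.card : ℝ))) := hcast
    _ ≤ 2 * ((x ^ 2 / m + 1) * (x * x)) := by gcongr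
    _ = 2 * x ^ 2 * (x ^ 2 / m + 1) := by ring
end

section
/- There is an absolute constant C > 0 such that the following holds. Let m ≥ 2 be an integer, let a be an integer with gcd(a,m) = f, and let x be a real number with x ≥ m^{1/2}. Then the exponential sum S₂(a;x) = Σ_{p₁,p₂ ≤ x, gcd(p₁p₂,m)=1} e(a·p₁⁻¹·p₂⁻¹ / m), where the sum runs over pairs of primes p₁, p₂ ≤ x coprime to m, satisfies |S₂(a;x)| ≤ C·x·(f·x/m + 1)·(m/f)^{1/2}. -/
open scoped BigOperators

/-- The multiplicative inverse modulo `m` of `n`, as a natural number in `[0, m)`. -/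
noncomputable def minv (m n : ℕ) : ℕ := ((n : ZMod m)⁻¹).val

/-- The primes `p ≤ x` that are coprime to `m`. -/
noncomputable def primesTo (m : ℕ) (x : ℝ) : Finset ℕ :=
  open Classical in
  (Finset.Icc 1 ⌊x⌋₊).filter fun p => p.Prime ∧ Nat.Coprime p m

/-- The additive character `e_m(z) = exp(2 π i z / m)`. -/
noncomputable def eM (m : ℕ) (z : ℂ) : ℂ := Complex.exp (2 * Real.pi * Complex.I * z / m)

noncomputable def EE (q : ℕ) (n : ℤ) : ℂ := Complex.exp (2 * Real.pi * Complex.I * n / q)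

lemma EE_add (q : ℕ) (a b : ℤ) : EE q (a + b) = EE q a * EE q b := by
  rw [EE, EE, EE, ← Complex.exp_add]
  congr 1
  push_cast
  ring

lemma EE_int_mul (q : ℕ) (hq : q ≠ 0) (k : ℤ) : EE q ((q:ℤ) * k) = 1 := by
  rw [EE]
  have hq' : (q:ℂ) ≠ 0 := by exact_mod_cast hq
  have h : 2 * (Real.pi:ℂ) * Complex.I * ((((q:ℤ) * k : ℤ)):ℂ) / q
      = (k:ℂ) * (2 * (Real.pi:ℂ) * Complex.I) := by
    push_cast
    field_simp
  rw [h, Complex.exp_int_mul_two_pi_mul_I]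

lemma EE_congr {q : ℕ} (hq : q ≠ 0) {a b : ℤ} (h : (q:ℤ) ∣ a - b) : EE q a = EE q b := by
  obtain ⟨k, hk⟩ := h
  have : a = b + (q:ℤ) * k := by linarith
  rw [this, EE_add, EE_int_mul q hq, mul_one]

lemma EE_conj (q : ℕ) (n : ℤ) : (starRingEnd ℂ) (EE q n) = EE q (-n) := by
  rw [EE, EE, ← Complex.exp_conj]
  congr 1
  simp only [map_div₀, map_mul, Complex.conj_I, Complex.conj_ofReal, map_ofNat,
    map_intCast, map_natCast]
  push_cast
  ring

lemma EE_sum (q : ℕ) (hq : 0 < q) (s : ℤ) :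
    ∑ r ∈ Finset.range q, EE q ((r : ℤ) * s) = if (q:ℤ) ∣ s then (q:ℂ) else 0 := by
  have hq0 : q ≠ 0 := hq.ne'
  have hpow : ∀ r : ℕ, EE q ((r:ℤ) * s) = EE q s ^ r := by
    intro r
    induction r with
    | zero => simp [EE]
    | succ n ih =>
        have : ((n+1 : ℕ):ℤ) * s = (n:ℤ) * s + s := by push_cast; ring
        rw [this, EE_add, ih, pow_succ]
  simp_rw [hpow]
  by_cases h : (q:ℤ) ∣ s
  · have h1 : EE q s = 1 := by
      obtain ⟨k, hk⟩ := h
      rw [hk]; exact EE_int_mul q hq0 k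
    simp [h1, h]
  · have h1 : EE q s ≠ 1 := by
      intro hc
      apply h
      rw [EE, Complex.exp_eq_one_iff] at hc
      obtain ⟨n, hn⟩ := hc
      have hq' : (q:ℂ) ≠ 0 := by exact_mod_cast hq0
      have hpi : (2 * (Real.pi:ℂ) * Complex.I) ≠ 0 := by
        simp [Real.pi_ne_zero, Complex.I_ne_zero, Complex.ofReal_ne_zero]
      have hs : (s:ℂ) = (n:ℂ) * q := by
        have h2 : 2 * (Real.pi:ℂ) * Complex.I * (s:ℂ)
            = 2 * (Real.pi:ℂ) * Complex.I * ((n:ℂ) * q) := by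
          field_simp at hn
          linear_combination (2 * (Real.pi:ℂ) * Complex.I) * hn
        exact mul_left_cancel₀ hpi h2
      have hs' : (s:ℂ) = (q:ℂ) * n := by rw [hs]; ring
      exact ⟨n, by exact_mod_cast hs'⟩
    rw [geom_sum_eq h1]
    have hqq : EE q s ^ q = 1 := by
      rw [← hpow q]
      have : ((q:ℕ):ℤ) * s = (q:ℤ) * s := rfl
      rw [this]
      obtain h2 := EE_int_mul q hq0 s
      exact h2
    rw [hqq]
    simp [h]

lemma count_mod (X q c : ℕ) (hq : 0 < q) :
    ((Finset.Icc 1 X).filter (fun n => n % q = c)).card ≤ X / q + 1 := by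
  classical
  have h : ((Finset.Icc 1 X).filter (fun n => n % q = c)).card
      ≤ (Finset.range (X / q + 1)).card := by
    apply Finset.card_le_card_of_injOn (fun n => n / q)
    · intro n hn
      simp only [Finset.coe_filter, Set.mem_setOf_eq, Finset.mem_filter, Finset.mem_Icc] at hn
      simp only [Finset.coe_range, Set.mem_Iio, Finset.mem_coe, Finset.mem_range]
      have := Nat.div_le_div_right (c := q) hn.1.2
      omega
    · intro n hn n' hn' hnn
      simp only [Finset.coe_filter, Set.mem_setOf_eq, Finset.mem_Icc] at hn hn'
      have e1 := Nat.div_add_mod n q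
      have e2 := Nat.div_add_mod n' q
      simp only at hnn
      rw [← e1, ← e2, hnn, hn.2, hn'.2]
  simpa using h

set_option maxHeartbeats 2000000 in
theorem stmt_9 : ∃ C : ℝ, 0 < C ∧ ∀ m : ℕ, 2 ≤ m → ∀ a : ℤ, ∀ f : ℕ, Int.gcd a m = f →
    ∀ x : ℝ, (m : ℝ) ^ ((1 : ℝ) / 2) ≤ x →
      ‖(∑ p₁ ∈ primesTo m x, ∑ p₂ ∈ primesTo m x,
          eM m ((a : ℂ) * (minv m p₁ : ℂ) * (minv m p₂ : ℂ)))‖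
        ≤ C * x * ((f : ℝ) * x / m + 1) * ((m : ℝ) / f) ^ ((1 : ℝ) / 2) := by
  classical
  refine ⟨1, one_pos, ?_⟩
  intro m hm a f hf x hx
  have hm0 : 0 < m := by omega
  haveI : NeZero m := ⟨hm0.ne'⟩
  set P := primesTo m x with hP
  set X := ⌊x⌋₊ with hX
  set u : ℕ → ℕ := fun p => minv m p with hu
  -- basic facts about f, q, a₁
  have hf_pos : 0 < f := by
    rcases Nat.eq_zero_or_pos f with h | h
    · exfalso
      rw [h] at hf
      have := Int.gcd_eq_zero_iff.mp hf
      have : (m:ℤ) = 0 := this.2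
      omega
    · exact h
  have hfm : f ∣ m := by
    have h : (f:ℤ) ∣ (m:ℤ) := hf ▸ Int.gcd_dvd_right a (m:ℤ)
    exact_mod_cast h
  set q := m / f with hq
  have hmfq : m = f * q := (Nat.mul_div_cancel' hfm).symm
  have hq_pos : 0 < q := Nat.div_pos (Nat.le_of_dvd hm0 hfm) hf_pos
  set a₁ : ℤ := a / f with ha₁
  have hfa : (f:ℤ) ∣ a := hf ▸ Int.gcd_dvd_left a (m:ℤ)
  have ha : a = (f:ℤ) * a₁ := (Int.mul_ediv_cancel' hfa).symm
  have hcop : IsCoprime a₁ (q:ℤ) := by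
    rw [Int.isCoprime_iff_gcd_eq_one]
    have h0 : 0 < Int.gcd a (m:ℤ) := by rw [hf]; exact hf_pos
    have h := Int.gcd_div_gcd_div_gcd h0
    have hgf : (Int.gcd a (m:ℤ) : ℤ) = (f:ℤ) := by exact_mod_cast hf
    rw [hgf] at h
    have hqint : ((m:ℤ)) / (f:ℤ) = (q:ℤ) := by
      rw [hmfq]; push_cast
      rw [Int.mul_ediv_cancel_left _ (by exact_mod_cast hf_pos.ne' : (f:ℤ) ≠ 0)]
    rw [hqint] at h
    exact h
  -- inverse property
  have hinv : ∀ p ∈ P, (q:ℤ) ∣ (p:ℤ) * (u p : ℤ) - 1 := by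
    intro p hp
    have hp' : Nat.Coprime p m := ((Finset.mem_filter.mp hp).2).2
    have h1 : (p : ZMod m) * (p : ZMod m)⁻¹ = 1 := ZMod.coe_mul_inv_eq_one p hp'
    have h2 : ((u p : ℕ) : ZMod m) = (p : ZMod m)⁻¹ := ZMod.natCast_rightInverse _
    have h3 : ((p * u p : ℕ) : ZMod m) = ((1 : ℕ) : ZMod m) := by
      push_cast
      rw [h2, h1]
    have h4 : (p * u p) ≡ 1 [MOD m] := (ZMod.natCast_eq_natCast_iff _ _ _).mp h3
    have h5 : (m:ℤ) ∣ (1:ℤ) - (p * u p : ℕ) := by exact_mod_cast Nat.modEq_iff_dvd.mp h4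
    have h6 : (m:ℤ) ∣ (p:ℤ) * (u p : ℤ) - 1 := by
      have h5' := dvd_neg.mpr h5
      have he : -((1:ℤ) - (p * u p : ℕ)) = (p:ℤ) * (u p : ℤ) - 1 := by push_cast; ring
      rwa [he] at h5'
    have hqm : (q:ℤ) ∣ (m:ℤ) := by
      have : q ∣ m := ⟨f, by rw [hmfq]; ring⟩
      exact_mod_cast this
    exact dvd_trans hqm h6
  -- congruence of residues
  have hmod : ∀ p ∈ P, ∀ p' ∈ P, (q:ℤ) ∣ ((u p : ℤ) - (u p' : ℤ)) → p % q = p' % q := by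
    intro p hp p' hp' h
    have h1 := hinv p hp
    have h2 := hinv p' hp'
    have key : (p':ℤ) - (p:ℤ) =
        (p:ℤ)*((p':ℤ)*(u p' : ℤ) - 1) - (p':ℤ)*((p:ℤ)*(u p : ℤ) - 1)
          + (p:ℤ)*(p':ℤ)*((u p : ℤ) - (u p' : ℤ)) := by ring
    have hdvd : (q:ℤ) ∣ (p':ℤ) - (p:ℤ) := by
      rw [key]
      exact dvd_add (dvd_sub (h2.mul_left (p:ℤ)) (h1.mul_left (p':ℤ))) (h.mul_left _)
    exact Nat.modEq_iff_dvd.mpr hdvd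
  -- rr
  set rr : ℕ → ℕ := fun p => ((a₁ * (u p : ℤ)) % (q:ℤ)).toNat with hrr
  have hqz : ((q:ℕ):ℤ) ≠ 0 := by exact_mod_cast hq_pos.ne'
  have hrr_nonneg : ∀ p, (0:ℤ) ≤ (a₁ * (u p : ℤ)) % (q:ℤ) := fun p => Int.emod_nonneg _ hqz
  have hrr_cast : ∀ p, ((rr p : ℕ) : ℤ) = (a₁ * (u p : ℤ)) % (q:ℤ) := fun p =>
    Int.toNat_of_nonneg (hrr_nonneg p)
  have hrr_lt : ∀ p, rr p < q := by
    intro p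
    have h2 : (a₁ * (u p : ℤ)) % (q:ℤ) < (q:ℤ) := Int.emod_lt_of_pos _ (by exact_mod_cast hq_pos)
    have := hrr_cast p
    omega
  have hrr_cong : ∀ p, (q:ℤ) ∣ a₁ * (u p : ℤ) - (rr p : ℤ) := by
    intro p
    rw [hrr_cast p]
    exact Int.dvd_self_sub_of_emod_eq rfl
  -- term identity
  have hm' : (m:ℂ) ≠ 0 := by exact_mod_cast hm0.ne'
  have hq' : (q:ℂ) ≠ 0 := by exact_mod_cast hq_pos.ne'
  have hterm : ∀ p p' : ℕ, eM m ((a:ℂ) * (u p : ℂ) * (u p' : ℂ)) = EE q ((rr p : ℤ) * (u p' : ℤ)) := by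
    intro p p'
    have step1 : eM m ((a:ℂ) * (u p : ℂ) * (u p' : ℂ)) = EE q (a₁ * (u p : ℤ) * (u p' : ℤ)) := by
      rw [eM, EE]
      congr 1
      rw [div_eq_div_iff hm' hq']
      have haC : (a:ℂ) = (f:ℂ) * (a₁:ℂ) := by exact_mod_cast congrArg (Int.cast : ℤ → ℂ) ha
      have hmC : (m:ℂ) = (f:ℂ) * (q:ℂ) := by exact_mod_cast congrArg (Nat.cast : ℕ → ℂ) hmfq
      rw [haC, hmC]
      push_cast
      ring
    rw [step1]
    apply EE_congr hq_pos.ne'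
    have : a₁ * (u p : ℤ) * (u p' : ℤ) - (rr p : ℤ) * (u p' : ℤ)
        = (a₁ * (u p : ℤ) - (rr p : ℤ)) * (u p' : ℤ) := by ring
    rw [this]
    exact (hrr_cong p).mul_right _
  -- T
  set T : ℕ → ℂ := fun r => ∑ p ∈ P, EE q ((r:ℤ) * (u p : ℤ)) with hT
  have hTsum : ∀ p : ℕ, (∑ p₂ ∈ P, eM m ((a:ℂ) * (u p : ℂ) * (u p₂ : ℂ))) = T (rr p) := by
    intro p
    exact Finset.sum_congr rfl fun p₂ _ => hterm p p₂
  set N := P.card with hN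
  set K : ℕ := X / q + 1 with hK
  -- fiber bound
  have hPsub : P ⊆ Finset.Icc 1 X := Finset.filter_subset _ _
  have hfiber : ∀ j, (P.filter (fun p => rr p = j)).card ≤ K := by
    intro j
    rcases (P.filter (fun p => rr p = j)).eq_empty_or_nonempty with h | ⟨p₀, hp₀⟩
    · rw [h, Finset.card_empty]; exact Nat.zero_le _
    · have hp₀P : p₀ ∈ P := (Finset.mem_filter.mp hp₀).1
      have hp₀rr : rr p₀ = j := (Finset.mem_filter.mp hp₀).2
      have hsub : P.filter (fun p => rr p = j) ⊆ (Finset.Icc 1 X).filter (fun n => n % q = p₀ % q) := by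
        intro p hp
        have hpP : p ∈ P := (Finset.mem_filter.mp hp).1
        have hprr : rr p = j := (Finset.mem_filter.mp hp).2
        refine Finset.mem_filter.mpr ⟨hPsub hpP, ?_⟩
        apply hmod p hpP p₀ hp₀P
        have d1 := hrr_cong p
        have d2 := hrr_cong p₀
        have hj : ((rr p : ℕ) : ℤ) = ((rr p₀ : ℕ) : ℤ) := by
          rw [hprr, hp₀rr]
        have hdv : (q:ℤ) ∣ a₁ * ((u p : ℤ) - (u p₀ : ℤ)) := by
          have e : a₁ * ((u p : ℤ) - (u p₀ : ℤ))
              = (a₁ * (u p : ℤ) - (rr p : ℤ)) - (a₁ * (u p₀ : ℤ) - (rr p₀ : ℤ))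
                + ((rr p : ℤ) - (rr p₀ : ℤ)) := by ring
          have h0 : (q:ℤ) ∣ ((rr p : ℤ) - (rr p₀ : ℤ)) := by
            rw [hj, sub_self]
            exact dvd_zero _
          rw [e]
          exact dvd_add (dvd_sub d1 d2) h0
        exact hcop.symm.dvd_of_dvd_mul_left hdv
      calc (P.filter (fun p => rr p = j)).card
          ≤ ((Finset.Icc 1 X).filter (fun n => n % q = p₀ % q)).card := Finset.card_le_card hsub
        _ ≤ K := count_mod X q _ hq_pos
  -- Step 1-2: Cauchy-Schwarz
  set S := ∑ p₁ ∈ P, ∑ p₂ ∈ P, eM m ((a:ℂ) * (u p₁ : ℂ) * (u p₂ : ℂ)) with hS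
  have h1 : ‖S‖ ≤ ∑ p ∈ P, ‖T (rr p)‖ := by
    rw [hS]
    calc ‖(∑ p₁ ∈ P, ∑ p₂ ∈ P, eM m ((a:ℂ) * (u p₁ : ℂ) * (u p₂ : ℂ)))‖
        = ‖(∑ p₁ ∈ P, T (rr p₁))‖ := by
          congr 1; exact Finset.sum_congr rfl fun p _ => hTsum p
      _ ≤ ∑ p ∈ P, ‖T (rr p)‖ := norm_sum_le _ _
  have h2 : (∑ p ∈ P, ‖T (rr p)‖)^2 ≤ (N:ℝ) * ∑ p ∈ P, (‖T (rr p)‖)^2 := by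
    have := Finset.sum_mul_sq_le_sq_mul_sq P (fun _ => (1:ℝ)) (fun p => ‖T (rr p)‖)
    simpa [hN] using this
  -- Step 3: group by rr
  have h3 : ∑ p ∈ P, (‖T (rr p)‖)^2 ≤ (K:ℝ) * ∑ r ∈ Finset.range q, (‖T r‖)^2 := by
    have hmaps : ∀ p ∈ P, rr p ∈ Finset.range q := fun p _ => Finset.mem_range.mpr (hrr_lt p)
    rw [← Finset.sum_fiberwise_of_maps_to hmaps (fun p => (‖T (rr p)‖)^2), Finset.mul_sum]
    apply Finset.sum_le_sum
    intro j _
    have he : ∑ p ∈ P.filter (fun p => rr p = j), (‖T (rr p)‖)^2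
        = ((P.filter (fun p => rr p = j)).card : ℝ) * (‖T j‖)^2 := by
      rw [Finset.sum_congr rfl (fun p hp => by rw [(Finset.mem_filter.mp hp).2]),
        Finset.sum_const, nsmul_eq_mul]
    rw [he]
    apply mul_le_mul_of_nonneg_right _ (by positivity)
    exact_mod_cast hfiber j
  -- Step 4: orthogonality
  have h4 : ∑ r ∈ Finset.range q, (‖T r‖)^2
      = ∑ p₂ ∈ P, ∑ p₃ ∈ P, (if (q:ℤ) ∣ ((u p₂ : ℤ) - (u p₃ : ℤ)) then (q:ℝ) else 0) := by
    have hcx : ((∑ r ∈ Finset.range q, (‖T r‖)^2 : ℝ) : ℂ)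
        = ((∑ p₂ ∈ P, ∑ p₃ ∈ P, (if (q:ℤ) ∣ ((u p₂:ℤ) - (u p₃:ℤ)) then (q:ℝ) else 0) : ℝ) : ℂ) := by
      push_cast
      calc ∑ r ∈ Finset.range q, ((‖T r‖ : ℂ))^2
          = ∑ r ∈ Finset.range q, T r * (starRingEnd ℂ) (T r) := by
            refine Finset.sum_congr rfl fun r _ => ?_
            rw [Complex.mul_conj, ← Complex.sq_norm]
            push_cast
            ring
        _ = ∑ r ∈ Finset.range q, ∑ p₂ ∈ P, ∑ p₃ ∈ P, EE q ((r:ℤ) * ((u p₂:ℤ) - (u p₃:ℤ))) := by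
            refine Finset.sum_congr rfl fun r _ => ?_
            rw [hT]
            simp only
            rw [map_sum, Finset.sum_mul_sum]
            refine Finset.sum_congr rfl fun p₂ _ => Finset.sum_congr rfl fun p₃ _ => ?_
            rw [EE_conj, ← EE_add]
            congr 1
            ring
        _ = ∑ p₂ ∈ P, ∑ p₃ ∈ P, ∑ r ∈ Finset.range q, EE q ((r:ℤ) * ((u p₂:ℤ) - (u p₃:ℤ))) := by
            rw [Finset.sum_comm]
            exact Finset.sum_congr rfl fun p₂ _ => Finset.sum_comm
        _ = ∑ p₂ ∈ P, ∑ p₃ ∈ P, (if (q:ℤ) ∣ ((u p₂:ℤ) - (u p₃:ℤ)) then ((q:ℕ):ℂ) else 0) := by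
            exact Finset.sum_congr rfl fun p₂ _ => Finset.sum_congr rfl fun p₃ _ =>
              EE_sum q hq_pos _
        _ = ∑ p₂ ∈ P, ∑ p₃ ∈ P, (((if (q:ℤ) ∣ ((u p₂:ℤ) - (u p₃:ℤ)) then ((q:ℕ):ℝ) else 0) : ℝ) : ℂ) := by
            refine Finset.sum_congr rfl fun p₂ _ => Finset.sum_congr rfl fun p₃ _ => ?_
            split <;> simp
    exact_mod_cast hcx
  -- Step 5: count pairs
  have h5 : ∑ p₂ ∈ P, ∑ p₃ ∈ P, (if (q:ℤ) ∣ ((u p₂ : ℤ) - (u p₃ : ℤ)) then (q:ℝ) else 0)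
      ≤ (N:ℝ) * ((K:ℝ) * (q:ℝ)) := by
    calc ∑ p₂ ∈ P, ∑ p₃ ∈ P, (if (q:ℤ) ∣ ((u p₂ : ℤ) - (u p₃ : ℤ)) then (q:ℝ) else 0)
        ≤ ∑ p₂ ∈ P, ((K:ℝ) * (q:ℝ)) := by
          apply Finset.sum_le_sum
          intro p₂ hp₂
          calc ∑ p₃ ∈ P, (if (q:ℤ) ∣ ((u p₂ : ℤ) - (u p₃ : ℤ)) then (q:ℝ) else 0)
              ≤ ∑ p₃ ∈ P, (if p₃ % q = p₂ % q then (q:ℝ) else 0) := by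
                apply Finset.sum_le_sum
                intro p₃ hp₃
                by_cases hc : (q:ℤ) ∣ ((u p₂ : ℤ) - (u p₃ : ℤ))
                · have : p₂ % q = p₃ % q := hmod p₂ hp₂ p₃ hp₃ hc
                  rw [if_pos hc, if_pos this.symm]
                · rw [if_neg hc]
                  split <;> positivity
            _ = ((P.filter (fun p₃ => p₃ % q = p₂ % q)).card : ℝ) * (q:ℝ) := by
                rw [← Finset.sum_filter, Finset.sum_const, nsmul_eq_mul]
            _ ≤ (K:ℝ) * (q:ℝ) := by
                apply mul_le_mul_of_nonneg_right _ (by positivity)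
                have hsub2 : P.filter (fun p₃ => p₃ % q = p₂ % q)
                    ⊆ (Finset.Icc 1 X).filter (fun n => n % q = p₂ % q) :=
                  Finset.filter_subset_filter _ hPsub
                have := le_trans (Finset.card_le_card hsub2) (count_mod X q (p₂ % q) hq_pos)
                exact_mod_cast this
      _ = (N:ℝ) * ((K:ℝ) * (q:ℝ)) := by rw [Finset.sum_const, nsmul_eq_mul, hN]
  -- combine into abs S ^ 2 bound
  have hS2 : (‖S‖)^2 ≤ ((N:ℝ) * (K:ℝ))^2 * (q:ℝ) := by
    have hA : (‖S‖)^2 ≤ (∑ p ∈ P, ‖T (rr p)‖)^2 := by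
      apply pow_le_pow_left₀ (norm_nonneg _) h1
    calc (‖S‖)^2 ≤ (∑ p ∈ P, ‖T (rr p)‖)^2 := hA
      _ ≤ (N:ℝ) * ∑ p ∈ P, (‖T (rr p)‖)^2 := h2
      _ ≤ (N:ℝ) * ((K:ℝ) * ∑ r ∈ Finset.range q, (‖T r‖)^2) := by
          apply mul_le_mul_of_nonneg_left h3 (Nat.cast_nonneg _)
      _ = (N:ℝ) * ((K:ℝ) * (∑ p₂ ∈ P, ∑ p₃ ∈ P, (if (q:ℤ) ∣ ((u p₂ : ℤ) - (u p₃ : ℤ)) then (q:ℝ) else 0))) := by rw [h4]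
      _ ≤ (N:ℝ) * ((K:ℝ) * ((N:ℝ) * ((K:ℝ) * (q:ℝ)))) := by
          apply mul_le_mul_of_nonneg_left _ (Nat.cast_nonneg _)
          apply mul_le_mul_of_nonneg_left h5 (Nat.cast_nonneg _)
      _ = ((N:ℝ) * (K:ℝ))^2 * (q:ℝ) := by ring
  -- final numeric bound
  have hx0 : 0 ≤ x := le_trans (Real.rpow_nonneg (Nat.cast_nonneg m) _) hx
  have hf' : (0:ℝ) < f := by exact_mod_cast hf_pos
  have hm'' : (0:ℝ) < m := by exact_mod_cast hm0
  have hq_real : (q:ℝ) = (m:ℝ)/(f:ℝ) := by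
    have : (m:ℝ) = (f:ℝ) * (q:ℝ) := by exact_mod_cast hmfq
    rw [this]
    field_simp
  have hNK : (N:ℝ) * (K:ℝ) ≤ x * ((f:ℝ) * x / m + 1) := by
    have hNX : N ≤ X := by
      calc N = P.card := rfl
        _ ≤ (Finset.Icc 1 X).card := Finset.card_le_card hPsub
        _ = X := by rw [Nat.card_Icc]; omega
    have hXx : (X:ℝ) ≤ x := Nat.floor_le hx0
    have hN' : (N:ℝ) ≤ x := le_trans (by exact_mod_cast hNX) hXx
    have hq0' : (0:ℝ) < (q:ℝ) := by exact_mod_cast hq_pos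
    have hK' : (K:ℝ) ≤ (f:ℝ) * x / m + 1 := by
      have h1' : ((X / q : ℕ) : ℝ) ≤ (X:ℝ) / (q:ℝ) := Nat.cast_div_le
      have h2' : (X:ℝ) / (q:ℝ) ≤ x / (q:ℝ) := by gcongr
      have h3' : x / (q:ℝ) = (f:ℝ) * x / m := by
        rw [hq_real, div_div_eq_mul_div]
        ring
      have hKc : (K:ℝ) = ((X / q : ℕ) : ℝ) + 1 := by
        rw [hK]; push_cast; ring
      rw [hKc]
      linarith
    exact mul_le_mul hN' hK' (Nat.cast_nonneg _) (by positivity)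
  have hgoal : ‖S‖ ≤ (x * ((f:ℝ) * x / m + 1)) * ((m:ℝ)/(f:ℝ)) ^ ((1:ℝ)/2) := by
    set B := x * ((f:ℝ) * x / m + 1) with hB
    have hB0 : 0 ≤ B := by positivity
    have hS2' : (‖S‖)^2 ≤ B^2 * ((m:ℝ)/(f:ℝ)) := by
      rw [← hq_real]
      calc (‖S‖)^2 ≤ ((N:ℝ) * (K:ℝ))^2 * (q:ℝ) := hS2
        _ ≤ B^2 * (q:ℝ) := by
            apply mul_le_mul_of_nonneg_right _ (Nat.cast_nonneg _)
            apply pow_le_pow_left₀ (mul_nonneg (Nat.cast_nonneg _) (Nat.cast_nonneg _)) hNK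
    have habs0 : 0 ≤ ‖S‖ := norm_nonneg _
    have hsq : ‖S‖ = Real.sqrt ((‖S‖)^2) := by
      rw [Real.sqrt_sq habs0]
    have hmf0 : (0:ℝ) ≤ (m:ℝ)/(f:ℝ) := by positivity
    calc ‖S‖ = Real.sqrt ((‖S‖)^2) := hsq
      _ ≤ Real.sqrt (B^2 * ((m:ℝ)/(f:ℝ))) := Real.sqrt_le_sqrt hS2'
      _ = B * ((m:ℝ)/(f:ℝ)) ^ ((1:ℝ)/2) := by
          rw [Real.sqrt_mul (sq_nonneg B), Real.sqrt_sq hB0, Real.sqrt_eq_rpow]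
  calc ‖S‖ ≤ (x * ((f:ℝ) * x / m + 1)) * ((m:ℝ)/(f:ℝ)) ^ ((1:ℝ)/2) := hgoal
    _ = 1 * x * ((f:ℝ) * x / m + 1) * ((m:ℝ)/(f:ℝ)) ^ ((1:ℝ)/2) := by ring
end

section
/- There is an absolute constant C > 0 such that the following holds. Let m ≥ 2 be an integer, let a be an integer with gcd(a,m) = f, and let x be a real number with x ≥ m^{1/2}. Then the exponential sum S₃(a;x) = Σ_{p₁,p₂,p₃ ≤ x, gcd(p₁p₂p₃,m)=1} e(a·p₁⁻¹·p₂⁻¹·p₃⁻¹ / m), where the sum runs over triples of primes p₁, p₂, p₃ ≤ x coprime to m, satisfies |S₃(a;x)| ≤ C·x^{5/2}·(f·x/m + 1)^{1/2}. -/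
open scoped BigOperators

-- ===== auxiliary lemmas =====

/-- count of elements of a residue class mod `d` inside a subset of `[1,N]` -/
lemma count_class_le {N d v : ℕ} (s : Finset ℕ) (hs : s ⊆ Finset.Icc 1 N)
    (hmod : ∀ n ∈ s, n % d = v % d) : s.card ≤ N / d + 1 := by
  have : s.card ≤ (Finset.Iic (N / d)).card := by
    apply Finset.card_le_card_of_injOn (fun n => n / d)
    · intro n hn
      have := (Finset.mem_Icc.mp (hs hn)).2
      exact Finset.mem_Iic.mpr (Nat.div_le_div_right this)
    · intro n hn n' hn' h
      simp only at h
      have h1 := hmod n hn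
      have h2 := hmod n' hn'
      have e1 := Nat.div_add_mod n d
      have e2 := Nat.div_add_mod n' d
      rw [h] at e1
      omega
  simpa [Nat.card_Iic] using this

/-- at most 2 ordered factorizations of `N` as a product of two primes -/
lemma prod_fiber_le_two (P : Finset ℕ) (hP : ∀ p ∈ P, p.Prime) (N : ℕ) :
    ((P ×ˢ P).filter (fun q => q.1 * q.2 = N)).card ≤ 2 := by
  classical
  rcases ((P ×ˢ P).filter (fun q => q.1 * q.2 = N)).eq_empty_or_nonempty with h | h
  · simp [h]
  · obtain ⟨⟨p, q⟩, hpq⟩ := h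
    rw [Finset.mem_filter, Finset.mem_product] at hpq
    obtain ⟨⟨hp, hq⟩, hN⟩ := hpq
    simp only at hp hq hN
    have hpp := hP p hp
    have hqp := hP q hq
    have hsub : ((P ×ˢ P).filter (fun q => q.1 * q.2 = N)) ⊆ {(p, q), (q, p)} := by
      intro ⟨r, s⟩ hrs
      rw [Finset.mem_filter, Finset.mem_product] at hrs
      obtain ⟨⟨hr, hs⟩, hrsN⟩ := hrs
      simp only at hr hs hrsN
      have hrp := hP r hr
      have hdvd : r ∣ p * q := by rw [hN, ← hrsN]; exact dvd_mul_right r s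
      have : r = p ∨ r = q := by
        rcases (Nat.Prime.dvd_mul hrp).mp hdvd with h' | h'
        · exact Or.inl ((Nat.prime_dvd_prime_iff_eq hrp hpp).mp h')
        · exact Or.inr ((Nat.prime_dvd_prime_iff_eq hrp hqp).mp h')
      rcases this with rfl | rfl
      · have : s = q := by
          have : r * s = r * q := by rw [hrsN, hN]
          exact Nat.eq_of_mul_eq_mul_left hrp.pos this
        simp [this]
      · have : s = p := by
          have : r * s = r * p := by rw [hrsN, ← hN, Nat.mul_comm]
          exact Nat.eq_of_mul_eq_mul_left hrp.pos this
        simp [this]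
    calc ((P ×ˢ P).filter (fun q => q.1 * q.2 = N)).card
        ≤ ({(p, q), (q, p)} : Finset (ℕ × ℕ)).card := Finset.card_le_card hsub
      _ ≤ 2 := Finset.card_insert_le _ _ |>.trans (by simp)

lemma eM_int (m : ℕ) [NeZero m] (j : ℤ) :
    eM m (j : ℂ) = ZMod.stdAddChar ((j : ZMod m)) := by
  rw [ZMod.stdAddChar_coe, eM]

lemma conj_psi (m : ℕ) [NeZero m] (v : ZMod m) :
    (starRingEnd ℂ) (ZMod.stdAddChar v) = ZMod.stdAddChar (-v) := by
  have h1 : ZMod.stdAddChar v * ZMod.stdAddChar (-v) = 1 := by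
    rw [← AddChar.map_add_eq_mul]; simp
  have h2 : (starRingEnd ℂ) (ZMod.stdAddChar v) * ZMod.stdAddChar v = 1 := by
    rw [mul_comm, Complex.mul_conj]
    norm_cast
    rw [ZMod.stdAddChar_apply]
    simp [Complex.normSq_eq_norm_sq, Circle.norm_coe]
  have hne : ZMod.stdAddChar v ≠ 0 := by
    intro h
    rw [h, zero_mul] at h1
    exact one_ne_zero h1.symm
  rw [mul_comm] at h2
  exact (mul_left_cancel₀ hne (h1.trans h2.symm)).symm

lemma orth (m : ℕ) [NeZero m] (c : ZMod m) :
    ∑ u : ZMod m, ZMod.stdAddChar (c * u) = if c = 0 then (m : ℂ) else 0 := by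
  have := AddChar.sum_mulShift c (ZMod.isPrimitive_stdAddChar m)
  rw [ZMod.card] at this
  simp_rw [mul_comm] at this
  rw [this]
  split <;> simp

lemma term_eq (m : ℕ) [NeZero m] (a : ℤ) (p₁ p₂ p₃ : ℕ) :
    eM m ((a : ℂ) * (minv m p₁ : ℂ) * (minv m p₂ : ℂ) * (minv m p₃ : ℂ))
      = ZMod.stdAddChar ((a : ZMod m) * ((p₁ : ZMod m)⁻¹ * (p₂ : ZMod m)⁻¹) * (p₃ : ZMod m)⁻¹) := by
  have : ((a : ℂ) * (minv m p₁ : ℂ) * (minv m p₂ : ℂ) * (minv m p₃ : ℂ))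
      = (((a * minv m p₁ * minv m p₂ * minv m p₃ : ℤ)) : ℂ) := by push_cast; ring
  rw [this, eM_int]
  congr 1
  push_cast [minv, ZMod.natCast_val, ZMod.cast_id]
  ring

-- ===== main theorem =====

set_option maxHeartbeats 1000000 in
theorem stmt_10 : ∃ C : ℝ, 0 < C ∧ ∀ m : ℕ, 2 ≤ m → ∀ a : ℤ, ∀ f : ℕ, Int.gcd a m = f →
    ∀ x : ℝ, (m : ℝ) ^ ((1 : ℝ) / 2) ≤ x →
      ‖(∑ p₁ ∈ primesTo m x, ∑ p₂ ∈ primesTo m x, ∑ p₃ ∈ primesTo m x,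
          eM m ((a : ℂ) * (minv m p₁ : ℂ) * (minv m p₂ : ℂ) * (minv m p₃ : ℂ)))‖
        ≤ C * x ^ ((5 : ℝ) / 2) * ((f : ℝ) * x / m + 1) ^ ((1 : ℝ) / 2) := by
  classical
  refine ⟨2, by norm_num, ?_⟩
  intro m hm a f hf x hx
  haveI : NeZero m := ⟨by omega⟩
  set L := ⌊x⌋₊ with hLdef
  set P := primesTo m x with hPdef
  set Q := P ×ˢ P with hQdef
  set α : ZMod m := (a : ZMod m) with hαdef
  set φ : ℕ × ℕ → ZMod m := fun q => (q.1 : ZMod m)⁻¹ * (q.2 : ZMod m)⁻¹ with hφdef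
  set T : ZMod m → ℂ := fun u => ∑ p ∈ P, ZMod.stdAddChar (u * (p : ZMod m)⁻¹) with hTdef
  set W : ZMod m → ℕ := fun u => ((Q.filter (fun q => φ q = u)).card) with hWdef
  -- basic facts
  have hmemP : ∀ p ∈ P, p.Prime ∧ Nat.Coprime p m ∧ 1 ≤ p ∧ p ≤ L := by
    intro p hp
    rw [hPdef, primesTo, Finset.mem_filter, Finset.mem_Icc] at hp
    exact ⟨hp.2.1, hp.2.2, hp.1.1, hp.1.2⟩
  have hPIcc : P ⊆ Finset.Icc 1 L := by
    intro p hp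
    exact Finset.mem_Icc.mpr ⟨(hmemP p hp).2.2.1, (hmemP p hp).2.2.2⟩
  have hunit : ∀ p ∈ P, (p : ZMod m) * (p : ZMod m)⁻¹ = 1 := by
    intro p hp
    exact ZMod.mul_inv_of_unit _ ((ZMod.isUnit_iff_coprime p m).mpr (hmemP p hp).2.1)
  -- real basic facts
  have hx0 : (0 : ℝ) ≤ x := le_trans (Real.rpow_nonneg (Nat.cast_nonneg m) _) hx
  have hm0 : (0 : ℝ) < m := by positivity
  have hmx : (m : ℝ) ≤ x ^ 2 := by
    have h1 : ((m : ℝ) ^ ((1 : ℝ) / 2)) ^ 2 ≤ x ^ 2 :=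
      pow_le_pow_left₀ (Real.rpow_nonneg (Nat.cast_nonneg m) _) hx 2
    calc (m : ℝ) = ((m : ℝ) ^ ((1 : ℝ) / 2)) ^ 2 := by
          rw [← Real.rpow_natCast ((m : ℝ) ^ ((1:ℝ)/2)) 2, ← Real.rpow_mul (Nat.cast_nonneg m)]
          norm_num
      _ ≤ x ^ 2 := h1
  have hx1 : (1 : ℝ) ≤ x := by
    have h1 : (1 : ℝ) ≤ m := by exact_mod_cast (by omega : 1 ≤ m)
    nlinarith [hmx]
  have hL : (L : ℝ) ≤ x := Nat.floor_le hx0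
  have hcardP : (P.card : ℝ) ≤ x := by
    have h1 : P.card ≤ L := by
      have := Finset.card_le_card hPIcc
      simpa [Nat.card_Icc] using this
    exact le_trans (Nat.cast_le.mpr h1) hL
  -- f and d
  have hf1 : 0 < f := by
    rw [← hf]
    have : (m : ℤ) ≠ 0 := by positivity
    exact Int.gcd_pos_of_ne_zero_right a this
  have hfdvd : f ∣ m := by
    rw [← hf]
    exact Int.natCast_dvd_natCast.mp (Int.gcd_dvd_right a m)
  set d : ℕ := m / f with hddef
  have hfd : f * d = m := Nat.mul_div_cancel' hfdvd
  have hd0 : 0 < d := by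
    rcases Nat.eq_zero_or_pos d with h | h
    · rw [h, Nat.mul_zero] at hfd; omega
    · exact h
  -- Step A : rewrite the sum
  have hS : (∑ p₁ ∈ P, ∑ p₂ ∈ P, ∑ p₃ ∈ P,
      eM m ((a : ℂ) * (minv m p₁ : ℂ) * (minv m p₂ : ℂ) * (minv m p₃ : ℂ)))
      = ∑ q ∈ Q, T (α * φ q) := by
    rw [hQdef, Finset.sum_product]
    apply Finset.sum_congr rfl
    intro p₁ _
    apply Finset.sum_congr rfl
    intro p₂ _
    rw [hTdef]
    simp only
    apply Finset.sum_congr rfl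
    intro p₃ _
    rw [term_eq]
  -- Step B : fiberwise
  have hB : ∑ q ∈ Q, ‖T (α * φ q)‖
      = ∑ u : ZMod m, (W u : ℝ) * ‖T (α * u)‖ := by
    rw [← Finset.sum_fiberwise_of_maps_to (fun q _ => Finset.mem_univ (φ q))
      (fun q => ‖T (α * φ q)‖)]
    apply Finset.sum_congr rfl
    intro u _
    calc ∑ q ∈ Q.filter (fun q => φ q = u), ‖T (α * φ q)‖
        = ∑ _q ∈ Q.filter (fun q => φ q = u), ‖T (α * u)‖ := by
          apply Finset.sum_congr rfl
          intro q hq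
          rw [(Finset.mem_filter.mp hq).2]
      _ = (W u : ℝ) * ‖T (α * u)‖ := by
          rw [Finset.sum_const, hWdef, nsmul_eq_mul]
  -- Step D : weight bound
  have hA : ∑ u : ZMod m, ((W u : ℝ)) ^ 2 ≤ 2 * x ^ 2 * (x ^ 2 / m + 1) := by
    have hfiber : ∀ q0 ∈ Q, W (φ q0) ≤ 2 * (L * L / m + 1) := by
      intro q0 hq0
      obtain ⟨h01, h02⟩ := Finset.mem_product.mp hq0
      have hcong : ∀ q ∈ Q.filter (fun q => φ q = φ q0),
          (q.1 * q.2) % m = (q0.1 * q0.2) % m := by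
        intro q hq
        obtain ⟨hqQ, hqe⟩ := Finset.mem_filter.mp hq
        obtain ⟨hq1, hq2⟩ := Finset.mem_product.mp hqQ
        simp only [hφdef] at hqe
        have ha := hunit q.1 hq1
        have hb := hunit q.2 hq2
        have hc := hunit q0.1 h01
        have hd := hunit q0.2 h02
        have key : ((q.1 * q.2 : ℕ) : ZMod m) = ((q0.1 * q0.2 : ℕ) : ZMod m) := by
          push_cast
          linear_combination (-((q.1:ZMod m) * (q.2:ZMod m) * (q0.1:ZMod m) * (q0.2:ZMod m))) * hqe
            - (q.1:ZMod m) * (q.2:ZMod m) * (q0.1:ZMod m) * (q0.1:ZMod m)⁻¹ * hd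
            - (q.1:ZMod m) * (q.2:ZMod m) * hc
            + (q0.1:ZMod m) * (q0.2:ZMod m) * (q.1:ZMod m) * (q.1:ZMod m)⁻¹ * hb
            + (q0.1:ZMod m) * (q0.2:ZMod m) * ha
        exact (ZMod.natCast_eq_natCast_iff _ _ _).mp key
      have h2 : ∀ n ∈ (Q.filter (fun q => φ q = φ q0)).image (fun q => q.1 * q.2),
          ((Q.filter (fun q => φ q = φ q0)).filter (fun q => q.1 * q.2 = n)).card ≤ 2 := by
        intro n _
        refine le_trans (Finset.card_le_card ?_)
          (prod_fiber_le_two P (fun p hp => (hmemP p hp).1) n)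
        intro q hq
        rw [Finset.mem_filter] at hq ⊢
        exact ⟨(Finset.mem_filter.mp hq.1).1, hq.2⟩
      have hcount := Finset.card_le_mul_card_image (Q.filter (fun q => φ q = φ q0)) 2 h2
      have himg : ((Q.filter (fun q => φ q = φ q0)).image (fun q => q.1 * q.2)).card
          ≤ L * L / m + 1 := by
        apply count_class_le (v := q0.1 * q0.2)
        · intro n hn
          obtain ⟨q, hq, rfl⟩ := Finset.mem_image.mp hn
          obtain ⟨hq1, hq2⟩ := Finset.mem_product.mp (Finset.mem_filter.mp hq).1
          have e1 := Finset.mem_Icc.mp (hPIcc hq1)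
          have e2 := Finset.mem_Icc.mp (hPIcc hq2)
          exact Finset.mem_Icc.mpr ⟨Nat.one_le_iff_ne_zero.mpr
            (Nat.mul_ne_zero (by omega) (by omega)), Nat.mul_le_mul e1.2 e2.2⟩
        · intro n hn
          obtain ⟨q, hq, rfl⟩ := Finset.mem_image.mp hn
          exact hcong q hq
      calc W (φ q0) ≤ 2 * ((Q.filter (fun q => φ q = φ q0)).image (fun q => q.1 * q.2)).card :=
            hcount
        _ ≤ 2 * (L * L / m + 1) := by omega
    have hnat : ∑ q ∈ Q, W (φ q) = ∑ u : ZMod m, W u * W u := by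
      rw [← Finset.sum_fiberwise_of_maps_to (fun q _ => Finset.mem_univ (φ q))
        (fun q => W (φ q))]
      apply Finset.sum_congr rfl
      intro u _
      calc ∑ q ∈ Q.filter (fun q => φ q = u), W (φ q)
          = ∑ _q ∈ Q.filter (fun q => φ q = u), W u := by
            apply Finset.sum_congr rfl
            intro q hq
            rw [(Finset.mem_filter.mp hq).2]
        _ = W u * W u := by rw [Finset.sum_const, smul_eq_mul]
    have hnat2 : ∑ q ∈ Q, W (φ q) ≤ Q.card * (2 * (L * L / m + 1)) := by
      have := Finset.sum_le_card_nsmul Q (fun q => W (φ q)) (2 * (L * L / m + 1)) hfiber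
      simpa [smul_eq_mul] using this
    have hQcard : (Q.card : ℝ) ≤ x ^ 2 := by
      rw [hQdef, Finset.card_product]
      push_cast
      nlinarith [hcardP, (Nat.cast_nonneg P.card : (0:ℝ) ≤ P.card)]
    have hLL : ((L * L / m : ℕ) : ℝ) ≤ x ^ 2 / m := by
      calc ((L * L / m : ℕ) : ℝ) ≤ ((L * L : ℕ) : ℝ) / m := Nat.cast_div_le
        _ ≤ x ^ 2 / m := by
          have hnum : ((L * L : ℕ) : ℝ) ≤ x ^ 2 := by
            push_cast
            nlinarith [hL, (Nat.cast_nonneg L : (0:ℝ) ≤ L)]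
          exact (div_le_div_iff_of_pos_right hm0).mpr hnum
    calc ∑ u : ZMod m, ((W u : ℝ)) ^ 2 = ((∑ u : ZMod m, W u * W u : ℕ) : ℝ) := by
          push_cast
          simp [pow_two]
      _ ≤ ((Q.card * (2 * (L * L / m + 1)) : ℕ) : ℝ) := Nat.cast_le.mpr (hnat ▸ hnat2)
      _ = (Q.card : ℝ) * (2 * (((L * L / m : ℕ) : ℝ) + 1)) := by push_cast; ring
      _ ≤ x ^ 2 * (2 * (x ^ 2 / m + 1)) := by
          apply mul_le_mul hQcard ?_ (by positivity) (by positivity)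
          have := hLL
          linarith
      _ = 2 * x ^ 2 * (x ^ 2 / m + 1) := by ring
  -- Step E : character sum second moment
  have hBB : ∑ u : ZMod m, (‖T (α * u)‖) ^ 2 ≤ m * (x * ((f : ℝ) * x / m + 1)) := by
    set c : ℕ × ℕ → ZMod m := fun q => α * ((q.1 : ZMod m)⁻¹ - (q.2 : ZMod m)⁻¹) with hcdef
    set Bad := Q.filter (fun q => c q = 0) with hBaddef
    have hC : ∑ u : ZMod m, T (α * u) * (starRingEnd ℂ) (T (α * u)) = (Bad.card : ℂ) * m := by
      have hterm : ∀ u : ZMod m, T (α * u) * (starRingEnd ℂ) (T (α * u))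
          = ∑ q ∈ Q, ZMod.stdAddChar ((c q) * u) := by
        intro u
        rw [hTdef]
        simp only
        rw [map_sum, Finset.sum_mul_sum, hQdef, Finset.sum_product]
        apply Finset.sum_congr rfl
        intro p _
        apply Finset.sum_congr rfl
        intro p' _
        rw [conj_psi, ← AddChar.map_add_eq_mul]
        congr 1
        rw [hcdef]
        simp only
        ring
      calc ∑ u : ZMod m, T (α * u) * (starRingEnd ℂ) (T (α * u))
          = ∑ u : ZMod m, ∑ q ∈ Q, ZMod.stdAddChar ((c q) * u) :=
            Finset.sum_congr rfl (fun u _ => hterm u)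
        _ = ∑ q ∈ Q, ∑ u : ZMod m, ZMod.stdAddChar ((c q) * u) := Finset.sum_comm
        _ = ∑ q ∈ Q, if c q = 0 then (m : ℂ) else 0 :=
            Finset.sum_congr rfl (fun q _ => orth m (c q))
        _ = (Bad.card : ℂ) * m := by
            rw [hBaddef, ← Finset.sum_filter, Finset.sum_const, nsmul_eq_mul]
    have hreal : ∑ u : ZMod m, (‖T (α * u)‖) ^ 2 = (Bad.card : ℝ) * m := by
      calc ∑ u : ZMod m, (‖T (α * u)‖) ^ 2
          = ∑ u : ZMod m, (T (α * u) * (starRingEnd ℂ) (T (α * u))).re := by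
            apply Finset.sum_congr rfl
            intro u _
            rw [Complex.mul_conj]
            simp [Complex.sq_norm]
        _ = (∑ u : ZMod m, T (α * u) * (starRingEnd ℂ) (T (α * u))).re :=
            (Complex.re_sum _ _).symm
        _ = ((Bad.card : ℂ) * (m : ℂ)).re := by rw [hC]
        _ = (Bad.card : ℝ) * m := by
            norm_cast
    -- modular claim
    have hmodq : ∀ q ∈ Bad, q.1 % d = q.2 % d := by
      intro q hq
      obtain ⟨hqQ, hqc⟩ := Finset.mem_filter.mp hq
      obtain ⟨hq1, hq2⟩ := Finset.mem_product.mp hqQ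
      have hv1 : ((minv m q.1 : ℕ) : ZMod m) = (q.1 : ZMod m)⁻¹ := ZMod.natCast_zmod_val _
      have hv2 : ((minv m q.2 : ℕ) : ZMod m) = (q.2 : ZMod m)⁻¹ := ZMod.natCast_zmod_val _
      have hdvdm : (m : ℤ) ∣ a * ((minv m q.1 : ℤ) - (minv m q.2 : ℤ)) := by
        rw [← ZMod.intCast_zmod_eq_zero_iff_dvd]
        push_cast
        rw [hv1, hv2]
        exact hqc
      have hf0 : (f : ℤ) ≠ 0 := by exact_mod_cast hf1.ne'
      have hfa : (f : ℤ) ∣ a := hf ▸ Int.gcd_dvd_left a m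
      obtain ⟨a', ha'⟩ := hfa
      have hdd : (d : ℤ) ∣ ((minv m q.1 : ℤ) - (minv m q.2 : ℤ)) := by
        have hm' : (m : ℤ) = (f : ℤ) * d := by exact_mod_cast hfd.symm
        have h2 : (d : ℤ) ∣ a' * ((minv m q.1 : ℤ) - (minv m q.2 : ℤ)) := by
          apply (mul_dvd_mul_iff_left hf0).mp
          have := hdvdm
          rw [hm', ha'] at this
          calc (f : ℤ) * d ∣ f * a' * ((minv m q.1 : ℤ) - (minv m q.2 : ℤ)) := this
            _ = (f : ℤ) * (a' * ((minv m q.1 : ℤ) - (minv m q.2 : ℤ))) := by ring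
        have hcop : IsCoprime (d : ℤ) a' := by
          have hpos : 0 < Int.gcd a m := hf ▸ hf1
          have hg := Int.gcd_div_gcd_div_gcd hpos
          rw [hf] at hg
          have ea : a / (f : ℤ) = a' := by
            rw [ha']
            exact Int.mul_ediv_cancel_left _ hf0
          have em : (m : ℤ) / (f : ℤ) = d := by
            rw [hm']
            exact Int.mul_ediv_cancel_left _ hf0
          rw [ea, em] at hg
          exact (Int.isCoprime_iff_gcd_eq_one.mpr hg).symm
        exact hcop.dvd_of_dvd_mul_left h2
      have hvv : minv m q.2 ≡ minv m q.1 [MOD d] := Nat.modEq_iff_dvd.mpr hdd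
      have hdm : d ∣ m := ⟨f, by rw [← hfd]; ring⟩
      have hu1 : q.1 * minv m q.1 ≡ 1 [MOD m] := by
        apply (ZMod.natCast_eq_natCast_iff _ _ _).mp
        push_cast
        rw [hv1]
        rw [hunit q.1 hq1]
      have hu2 : q.2 * minv m q.2 ≡ 1 [MOD m] := by
        apply (ZMod.natCast_eq_natCast_iff _ _ _).mp
        push_cast
        rw [hv2]
        rw [hunit q.2 hq2]
      have hu1' : q.1 * minv m q.1 ≡ 1 [MOD d] := hu1.of_dvd hdm
      have hu2' : q.2 * minv m q.2 ≡ 1 [MOD d] := hu2.of_dvd hdm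
      have : q.1 ≡ q.2 [MOD d] := by
        calc q.1 = q.1 * 1 := (mul_one _).symm
          _ ≡ q.1 * (q.2 * minv m q.2) [MOD d] := (hu2'.symm).mul_left q.1
          _ = q.2 * (q.1 * minv m q.2) := by ring
          _ ≡ q.2 * (q.1 * minv m q.1) [MOD d] := ((hvv.mul_left q.1).mul_left q.2)
          _ ≡ q.2 * 1 [MOD d] := hu1'.mul_left q.2
          _ = q.2 := mul_one _
      exact this
    -- counting
    have hcount : Bad.card ≤ P.card * (L / d + 1) := by
      have hfib : Bad.card = ∑ p₂ ∈ P, (Bad.filter (fun q => q.2 = p₂)).card :=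
        Finset.card_eq_sum_card_fiberwise
          (fun q hq => (Finset.mem_product.mp (Finset.mem_filter.mp hq).1).2)
      have heach : ∀ p₂ ∈ P, (Bad.filter (fun q => q.2 = p₂)).card ≤ L / d + 1 := by
        intro p₂ _
        have himg : (Bad.filter (fun q => q.2 = p₂)).card
            = ((Bad.filter (fun q => q.2 = p₂)).image Prod.fst).card := by
          rw [Finset.card_image_of_injOn]
          intro q hq q' hq' he
          have e1 := (Finset.mem_filter.mp hq).2
          have e2 := (Finset.mem_filter.mp hq').2
          exact Prod.ext he (e1.trans e2.symm)
        rw [himg]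
        apply count_class_le (v := p₂)
        · intro n hn
          obtain ⟨q, hq, rfl⟩ := Finset.mem_image.mp hn
          exact hPIcc (Finset.mem_product.mp (Finset.mem_filter.mp
            (Finset.mem_filter.mp hq).1).1).1
        · intro n hn
          obtain ⟨q, hq, rfl⟩ := Finset.mem_image.mp hn
          have h1 := hmodq q (Finset.mem_filter.mp hq).1
          rw [(Finset.mem_filter.mp hq).2] at h1
          exact h1
      calc Bad.card = ∑ p₂ ∈ P, (Bad.filter (fun q => q.2 = p₂)).card := hfib
        _ ≤ P.card * (L / d + 1) := by
          have := Finset.sum_le_card_nsmul P _ (L / d + 1) heach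
          simpa [smul_eq_mul] using this
    -- real arithmetic
    rw [hreal]
    have hLd : ((L / d : ℕ) : ℝ) ≤ (f : ℝ) * x / m := by
      have h1 : ((L / d : ℕ) : ℝ) ≤ (L : ℝ) / d := Nat.cast_div_le
      have hd0' : (0 : ℝ) < d := by exact_mod_cast hd0
      have hf0' : (0 : ℝ) < f := by exact_mod_cast hf1
      have hfd' : (f : ℝ) * d = m := by exact_mod_cast hfd
      have h2 : (L : ℝ) / d = (f : ℝ) * L / m := by
        rw [← hfd']
        field_simp
      have h3 : (f : ℝ) * L / m ≤ (f : ℝ) * x / m := by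
        apply (div_le_div_iff_of_pos_right hm0).mpr
        nlinarith [hL, (Nat.cast_nonneg f : (0:ℝ) ≤ f)]
      linarith [h1, h2 ▸ h1]
    have hBadR : (Bad.card : ℝ) ≤ x * ((f : ℝ) * x / m + 1) := by
      calc (Bad.card : ℝ) ≤ ((P.card * (L / d + 1) : ℕ) : ℝ) := Nat.cast_le.mpr hcount
        _ = (P.card : ℝ) * (((L / d : ℕ) : ℝ) + 1) := by push_cast; ring
        _ ≤ x * ((f : ℝ) * x / m + 1) := by
            apply mul_le_mul hcardP (by linarith) (by positivity) (by linarith)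
    calc (Bad.card : ℝ) * m ≤ (x * ((f : ℝ) * x / m + 1)) * m := by
          apply mul_le_mul_of_nonneg_right hBadR (le_of_lt hm0)
      _ = m * (x * ((f : ℝ) * x / m + 1)) := by ring
  -- assembly
  set S : ℝ := ‖∑ p₁ ∈ P, ∑ p₂ ∈ P, ∑ p₃ ∈ P,
      eM m ((a : ℂ) * (minv m p₁ : ℂ) * (minv m p₂ : ℂ) * (minv m p₃ : ℂ))‖ with hSdef
  set y : ℝ := (f : ℝ) * x / m + 1 with hydef
  have hy0 : (0 : ℝ) ≤ y := by
    rw [hydef]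
    positivity
  have hSnn : 0 ≤ S := norm_nonneg _
  set R0 : ℝ := ∑ u : ZMod m, (W u : ℝ) * ‖T (α * u)‖ with hR0def
  have hstep1 : S ≤ R0 := by
    rw [hSdef, hS, ← hB]
    exact norm_sum_le _ _
  have hR0nn : 0 ≤ R0 := le_trans hSnn hstep1
  have hCS : R0 ^ 2 ≤ (∑ u : ZMod m, ((W u : ℝ)) ^ 2)
      * (∑ u : ZMod m, (‖T (α * u)‖) ^ 2) :=
    Finset.sum_mul_sq_le_sq_mul_sq Finset.univ _ _
  have hsum1nn : (0 : ℝ) ≤ ∑ u : ZMod m, ((W u : ℝ)) ^ 2 :=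
    Finset.sum_nonneg (fun u _ => sq_nonneg _)
  have hsum2nn : (0 : ℝ) ≤ ∑ u : ZMod m, (‖T (α * u)‖) ^ 2 :=
    Finset.sum_nonneg (fun u _ => sq_nonneg _)
  have hR2 : R0 ^ 2 ≤ 4 * x ^ 5 * y := by
    calc R0 ^ 2 ≤ (∑ u : ZMod m, ((W u : ℝ)) ^ 2)
          * (∑ u : ZMod m, (‖T (α * u)‖) ^ 2) := hCS
      _ ≤ (2 * x ^ 2 * (x ^ 2 / m + 1)) * (m * (x * y)) := by
          apply mul_le_mul hA hBB hsum2nn (by positivity)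
      _ = 2 * x ^ 3 * (x ^ 2 + m) * y := by
          field_simp
      _ ≤ 4 * x ^ 5 * y := by
          have h6 : (x ^ 2 + (m : ℝ)) ≤ 2 * x ^ 2 := by linarith
          calc 2 * x ^ 3 * (x ^ 2 + (m : ℝ)) * y ≤ 2 * x ^ 3 * (2 * x ^ 2) * y := by
                apply mul_le_mul_of_nonneg_right
                  (mul_le_mul_of_nonneg_left h6 (by positivity)) hy0
            _ = 4 * x ^ 5 * y := by ring
  have hS2 : S ^ 2 ≤ (2 * x ^ ((5 : ℝ) / 2) * y ^ ((1 : ℝ) / 2)) ^ 2 := by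
    have e1 : (x ^ ((5 : ℝ) / 2)) ^ 2 = x ^ (5 : ℕ) := by
      rw [← Real.rpow_natCast (x ^ ((5 : ℝ) / 2)) 2, ← Real.rpow_mul hx0,
        show ((5 : ℝ) / 2 * (2 : ℕ) : ℝ) = ((5 : ℕ) : ℝ) by norm_num, Real.rpow_natCast]
    have e2 : (y ^ ((1 : ℝ) / 2)) ^ 2 = y := by
      rw [← Real.rpow_natCast (y ^ ((1 : ℝ) / 2)) 2, ← Real.rpow_mul hy0,
        show ((1 : ℝ) / 2 * (2 : ℕ) : ℝ) = 1 by norm_num, Real.rpow_one]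
    have hRHS : (2 * x ^ ((5 : ℝ) / 2) * y ^ ((1 : ℝ) / 2)) ^ 2 = 4 * x ^ 5 * y := by
      calc (2 * x ^ ((5 : ℝ) / 2) * y ^ ((1 : ℝ) / 2)) ^ 2
          = 4 * (x ^ ((5 : ℝ) / 2)) ^ 2 * (y ^ ((1 : ℝ) / 2)) ^ 2 := by ring
        _ = 4 * x ^ 5 * y := by rw [e1, e2]
    rw [hRHS]
    calc S ^ 2 ≤ R0 ^ 2 := pow_le_pow_left₀ hSnn hstep1 2
      _ ≤ 4 * x ^ 5 * y := hR2
  have hRHSnn : 0 ≤ 2 * x ^ ((5 : ℝ) / 2) * y ^ ((1 : ℝ) / 2) := by positivity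
  calc S = Real.sqrt (S ^ 2) := (Real.sqrt_sq hSnn).symm
    _ ≤ Real.sqrt ((2 * x ^ ((5 : ℝ) / 2) * y ^ ((1 : ℝ) / 2)) ^ 2) := Real.sqrt_le_sqrt hS2
    _ = 2 * x ^ ((5 : ℝ) / 2) * y ^ ((1 : ℝ) / 2) := Real.sqrt_sq hRHSnn
end
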